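/- Let (X,d) be a pointed metric space, m ≥ 0, and f : X → S^m a continuous function. If the function f' : X → ℝ^{m+1} defined by f'(x) = |x|·f(x) is asymptotically Lipschitz, then f is Higson sublinear. -/

import Mathlib

/-- A function `s : [0,∞) → [0,∞)` is *asymptotically sublinear* if it is continuous,
nonnegative on `[0,∞)`, and for each non-constant linear function `r ↦ a·r + c`
(`a > 0`, `c ≥ 0`) there is `M ≥ 0` with `s(r) ≤ a·r + c + M` for all `r ≥ 0`. -/
def AsympSublinear (s : ℝ → ℝ) : Prop :=
  ContinuousOn s (Set.Ici 0) ∧ (∀ r : ℝ, 0 ≤ r → 0 ≤ s r) ∧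
  ∀ a : ℝ, 0 < a → ∀ c : ℝ, 0 ≤ c → ∃ M : ℝ, 0 ≤ M ∧
    ∀ r : ℝ, 0 ≤ r → s r ≤ a * r + c + M

/-- `f : X → Y` is *Higson sublinear* (with base point `x₀`) if for every asymptotically
sublinear `s` and all sequences `xₙ, yₙ → ∞` with `d(xₙ,yₙ) ≤ s(|xₙ|)`, one has
`d(f xₙ, f yₙ) → 0`. -/
def HigsonSublinear {X Y : Type*} [MetricSpace X] [MetricSpace Y] (x₀ : X) (f : X → Y) :
    Prop :=
  ∀ s : ℝ → ℝ, AsympSublinear s →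
    ∀ x y : ℕ → X,
      Filter.Tendsto (fun n => dist (x n) x₀) Filter.atTop Filter.atTop →
      Filter.Tendsto (fun n => dist (y n) x₀) Filter.atTop Filter.atTop →
      (∀ n, dist (x n) (y n) ≤ s (dist (x n) x₀)) →
      Filter.Tendsto (fun n => dist (f (x n)) (f (y n))) Filter.atTop (nhds 0)

/-- if `f : X → Sᵐ` is continuous and `f'(x) = |x|·f(x)` is asymptotically
Lipschitz, then `f` is Higson sublinear. -/
theorem stmt_11 {X : Type*} [MetricSpace X] (x₀ : X) (m : ℕ)
    (f : X → EuclideanSpace ℝ (Fin (m + 1)))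
    (hf1 : ∀ x, ‖f x‖ = 1) (hfc : Continuous f)
    (hAL : ∃ lam M : ℝ, 0 ≤ lam ∧ 0 ≤ M ∧
      ∀ x y : X, ‖dist x x₀ • f x - dist y x₀ • f y‖ ≤ lam * dist x y + M) :
    HigsonSublinear x₀ f := by
  obtain ⟨lam, M, hlam, hM, hAL⟩ := hAL
  intro s hs x y hx hy hxy
  obtain ⟨hsc, hsnn, hsub⟩ := hs
  rw [Metric.tendsto_atTop]
  intro ε hε
  have hL0 : (0:ℝ) < lam + 1 := by positivity
  obtain ⟨M', hM'0, hM'⟩ := hsub (ε / (2 * (lam + 1))) (by positivity) 0 le_rfl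
  set C := (lam + 1) * M' + M with hC
  have hC0 : 0 ≤ C := by positivity
  have hR := hx.eventually_ge_atTop (max 1 (4 * C / ε))
  rw [Filter.eventually_atTop] at hR
  obtain ⟨N, hN⟩ := hR
  refine ⟨N, fun n hn => ?_⟩
  have hNn := hN n hn
  set r := dist (x n) x₀ with hr
  have hr1 : (1:ℝ) ≤ r := le_trans (le_max_left _ _) hNn
  have hr0 : (0:ℝ) < r := lt_of_lt_of_le one_pos hr1
  have key : r * dist (f (x n)) (f (y n)) ≤ (lam + 1) * dist (x n) (y n) + M := by
    have h1 : ‖r • f (x n) - dist (y n) x₀ • f (y n)‖ ≤ lam * dist (x n) (y n) + M :=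
      hAL (x n) (y n)
    have h2 : ‖(dist (y n) x₀ - r) • f (y n)‖ ≤ dist (x n) (y n) := by
      rw [norm_smul, hf1, mul_one, Real.norm_eq_abs, abs_sub_comm]
      exact abs_dist_sub_le (x n) (y n) x₀
    calc r * dist (f (x n)) (f (y n)) = ‖r • (f (x n) - f (y n))‖ := by
          rw [norm_smul, dist_eq_norm, Real.norm_eq_abs, abs_of_pos hr0]
      _ = ‖(r • f (x n) - dist (y n) x₀ • f (y n)) + (dist (y n) x₀ - r) • f (y n)‖ := by
          congr 1; module
      _ ≤ ‖r • f (x n) - dist (y n) x₀ • f (y n)‖ + ‖(dist (y n) x₀ - r) • f (y n)‖ :=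
          norm_add_le _ _
      _ ≤ lam * dist (x n) (y n) + M + dist (x n) (y n) := add_le_add h1 h2
      _ = (lam + 1) * dist (x n) (y n) + M := by ring
  have hs1 : dist (x n) (y n) ≤ s r := hxy n
  have hs2 : s r ≤ ε / (2 * (lam + 1)) * r + 0 + M' := hM' r (le_of_lt hr0)
  have hCr : C ≤ ε / 4 * r := by
    have h4 : 4 * C / ε ≤ r := le_trans (le_max_right _ _) hNn
    rw [div_le_iff₀ hε] at h4; nlinarith
  have hd : r * dist (f (x n)) (f (y n)) ≤ (3 * ε / 4) * r := by
    have : (lam + 1) * dist (x n) (y n) ≤ (lam + 1) * (ε / (2 * (lam + 1)) * r + M') := by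
      nlinarith
    have he : (lam + 1) * (ε / (2 * (lam + 1)) * r) = ε / 2 * r := by
      field_simp
    nlinarith
  have hdd : dist (f (x n)) (f (y n)) ≤ 3 * ε / 4 := by
    nlinarith
  rw [Real.dist_eq, sub_zero, abs_of_nonneg dist_nonneg]
  linarith
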